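/- For any real λ with 0 < |λ| < 2ⁿ⁻¹ (λ not a multiple of 2ⁿ), the phase-estimation probability satisfies |β(λ)|² ≥ sin²(πλ)/(π²λ²), where β(λ) := (1/2ⁿ) Σ_{t=0}^{2ⁿ−1} e^{2πi t λ / 2ⁿ}. -/

import Mathlib

/-- The amplitude arising from the inverse QFT in textbook phase estimation. -/
noncomputable def pePsi (n : ℕ) (lam : ℝ) : ℂ :=
  (1 / 2 ^ n : ℂ) * ∑ t ∈ Finset.range (2 ^ n),
    Complex.exp (2 * Real.pi * Complex.I * t * lam / 2 ^ n)

open Real Complex Finset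

lemma abs_exp_mul_I_sub_one (x : ℝ) :
    ‖Complex.exp (x * Complex.I) - 1‖ = 2 * |Real.sin (x / 2)| := by
  have h : Complex.exp (x * Complex.I) - 1
      = ((Real.cos x - 1 : ℝ) : ℂ) + ((Real.sin x : ℝ) : ℂ) * Complex.I := by
    rw [Complex.exp_mul_I]
    push_cast [Complex.cos_ofReal_re, Complex.sin_ofReal_re]
    rw [← Complex.ofReal_cos, ← Complex.ofReal_sin]
    ring
  rw [h, Complex.norm_add_mul_I]
  have h2 : (Real.cos x - 1) ^ 2 + Real.sin x ^ 2 = (2 * |Real.sin (x / 2)|) ^ 2 := by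
    have hs := Real.sin_sq_eq_half_sub (x / 2)
    rw [show 2 * (x / 2) = x by ring] at hs
    have hp := Real.sin_sq_add_cos_sq x
    rw [mul_pow, _root_.sq_abs, hs]
    nlinarith
  rw [h2, Real.sqrt_sq (by positivity)]


/-- For `0 < |λ| < 2ⁿ⁻¹`, the phase-estimation probability satisfies
`|β(λ)|² ≥ sin²(πλ)/(π²λ²)`. -/
theorem abs_sq_pePsi_ge (n : ℕ) (hn : 0 < n) (lam : ℝ)
    (h0 : 0 < |lam|) (h1 : |lam| < 2 ^ (n - 1)) :
    Real.sin (Real.pi * lam) ^ 2 / (Real.pi ^ 2 * lam ^ 2)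
      ≤ ‖pePsi n lam‖ ^ 2 := by
  have hpi := Real.pi_pos
  set x : ℝ := 2 * Real.pi * lam / 2 ^ n with hx
  have hlam : lam ≠ 0 := fun h => by simp [h] at h0
  -- rewrite the sum as a geometric series
  have hsum : pePsi n lam = (1 / 2 ^ n : ℂ) *
      ∑ t ∈ Finset.range (2 ^ n), Complex.exp ((x : ℂ) * Complex.I) ^ t := by
    unfold pePsi
    congr 1
    refine Finset.sum_congr rfl fun t _ => ?_
    rw [← Complex.exp_nat_mul]
    congr 1
    push_cast [hx]
    ring
  have hne : Complex.exp ((x : ℂ) * Complex.I) ≠ 1 := by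
    intro hcontra
    obtain ⟨k, hk⟩ := Complex.exp_eq_one_iff.mp hcontra
    have hxk : (x : ℂ) = ((2 * Real.pi * k : ℝ) : ℂ) := by
      have hI : ((2 * Real.pi * k : ℝ) : ℂ) * Complex.I = (k : ℂ) * (2 * Real.pi * Complex.I) := by
        push_cast; ring
      have := hk.trans hI.symm
      exact mul_right_cancel₀ Complex.I_ne_zero this
    have hxr : x = 2 * Real.pi * k := by exact_mod_cast hxk
    have hlk : lam = k * 2 ^ n := by
      have hxmul : x * 2 ^ n = 2 * Real.pi * lam := by
        rw [hx]; field_simp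
      have heq : 2 * Real.pi * lam = 2 * Real.pi * ((k : ℝ) * 2 ^ n) := by
        rw [← hxmul, hxr]; ring
      have hne2 : (2 * Real.pi : ℝ) ≠ 0 := by positivity
      exact (mul_left_cancel₀ hne2 heq.symm).symm
    have hkne : (k : ℝ) ≠ 0 := by
      intro h; apply hlam; rw [hlk, h, zero_mul]
    have hk1 : (1 : ℝ) ≤ |(k : ℝ)| := by
      have : k ≠ 0 := by exact_mod_cast hkne
      exact_mod_cast Int.one_le_abs this
    have : (2 : ℝ) ^ n ≤ |lam| := by
      rw [hlk, abs_mul, abs_of_pos (pow_pos (by norm_num : (0:ℝ) < 2) n)]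
      nlinarith [pow_pos (by norm_num : (0:ℝ) < 2) n]
    have hlt : (2 : ℝ) ^ (n - 1) ≤ 2 ^ n := by
      apply pow_le_pow_right₀ (by norm_num) (Nat.sub_le n 1)
    linarith
  rw [hsum, geom_sum_eq hne]
  rw [show (Complex.exp ((x:ℂ) * Complex.I)) ^ (2 ^ n)
      = Complex.exp ((((x * 2 ^ n : ℝ)) : ℂ) * Complex.I) by
    rw [← Complex.exp_nat_mul]; congr 1; push_cast; ring]
  have habs1 : ‖(1 / 2 ^ n : ℂ)‖ = 1 / 2 ^ n := by simp
  rw [norm_mul, habs1, norm_div, abs_exp_mul_I_sub_one, abs_exp_mul_I_sub_one]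
  have hx2 : x * 2 ^ n / 2 = Real.pi * lam := by
    field_simp [hx]; rw [hx, div_mul_cancel₀ _ (by positivity)]
  have hx3 : x / 2 = Real.pi * lam / 2 ^ n := by rw [hx]; ring
  rw [hx2, hx3]
  -- now a purely real inequality
  set θ : ℝ := Real.pi * lam / 2 ^ n with hθ
  have h2n : (0 : ℝ) < 2 ^ n := by positivity
  have hθne : Real.sin θ ≠ 0 := by
    have hθabs : |θ| < Real.pi := by
      rw [hθ, abs_div, abs_mul, abs_of_pos hpi, abs_of_pos h2n, div_lt_iff₀ h2n]
      have : (2:ℝ) ^ (n-1) ≤ 2 ^ n := pow_le_pow_right₀ (by norm_num) (Nat.sub_le n 1)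
      nlinarith
    have hθ0 : θ ≠ 0 := by
      rw [hθ]; positivity
    obtain ⟨hl, hr⟩ := abs_lt.1 hθabs
    exact fun h => hθ0 ((Real.sin_eq_zero_iff_of_lt_of_lt hl hr).mp h)
  have hsθ : 0 < Real.sin θ ^ 2 := by positivity
  have hbound : Real.sin θ ^ 2 ≤ θ ^ 2 := Real.sin_sq_le_sq
  have hRHS : (1 / 2 ^ n * (2 * |Real.sin (Real.pi * lam)| / (2 * |Real.sin θ|))) ^ 2
      = Real.sin (Real.pi * lam) ^ 2 / ((2 ^ n) ^ 2 * Real.sin θ ^ 2) := by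
    rw [mul_pow, div_pow, one_pow, div_pow, mul_pow, mul_pow, _root_.sq_abs, _root_.sq_abs]
    field_simp
  rw [hRHS]
  have hθsq : θ ^ 2 = Real.pi ^ 2 * lam ^ 2 / (2 ^ n) ^ 2 := by
    rw [hθ]; field_simp
  have hden : (2 ^ n : ℝ) ^ 2 * Real.sin θ ^ 2 ≤ Real.pi ^ 2 * lam ^ 2 := by
    calc (2 ^ n : ℝ) ^ 2 * Real.sin θ ^ 2 ≤ (2 ^ n : ℝ) ^ 2 * θ ^ 2 := by nlinarith
      _ = Real.pi ^ 2 * lam ^ 2 := by rw [hθsq]; field_simp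
  have hpos : (0:ℝ) < (2 ^ n : ℝ) ^ 2 * Real.sin θ ^ 2 := by positivity
  exact div_le_div_of_nonneg_left (by positivity) hpos hden
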